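/- arXiv:1810.02396 — 4 statements merged into one kernel-verified Lean document; each statement's English description precedes it below -/
import Mathlib

section
/- For q = 2 and n ≥ 1, any inner product encoding of the equality predicate EQ_n on [n] modulo 2 has length at least n − 1. -/
lemma matrix_rank_add_le {m n : Type*} [Fintype m] [Fintype n]
    {K : Type*} [Field K] (A B : Matrix m n K) :
    (A + B).rank ≤ A.rank + B.rank := by
  simp only [Matrix.rank]
  rw [Matrix.mulVecLin_add]
  have hle : LinearMap.range (A.mulVecLin + B.mulVecLin) ≤
      LinearMap.range A.mulVecLin ⊔ LinearMap.range B.mulVecLin := by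
    rintro _ ⟨v, rfl⟩
    exact Submodule.add_mem_sup ⟨v, rfl⟩ ⟨v, rfl⟩
  exact le_trans (Submodule.finrank_mono hle)
    (Submodule.finrank_add_le_finrank_add_finrank _ _)

/-- Any inner product encoding of the equality predicate on `[n]` modulo 2
has length at least `n - 1`. -/
theorem stmt_3 {n ℓ : ℕ} (hn : 1 ≤ n)
    (vx vy : Fin n → Fin ℓ → ZMod 2)
    (hcorrect : ∀ x y : Fin n, ((∑ i, vx x i * vy y i) = 0 ↔ x = y)) :
    n - 1 ≤ ℓ := by
  set A : Matrix (Fin n) (Fin ℓ) (ZMod 2) := Matrix.of vx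
  set B : Matrix (Fin ℓ) (Fin n) (ZMod 2) := Matrix.of fun i y => vy y i
  set M : Matrix (Fin n) (Fin n) (ZMod 2) := A * B with hM
  set J : Matrix (Fin n) (Fin n) (ZMod 2) := Matrix.of fun _ _ => 1 with hJdef
  have hMentry : ∀ x y, M x y = ∑ i, vx x i * vy y i := fun x y => rfl
  have hJe : ∀ x y, J x y = 1 := fun _ _ => rfl
  have hJM : J + M = (1 : Matrix (Fin n) (Fin n) (ZMod 2)) := by
    ext x y
    by_cases h : x = y
    · subst h
      have h0 : M x x = 0 := (hcorrect x x).mpr rfl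
      simp [Matrix.one_apply, h0, hJe, Pi.add_apply]
    · have h1 : M x y ≠ 0 := fun hc => h ((hcorrect x y).mp hc)
      have : M x y = 1 := by
        revert h1; generalize M x y = a; revert a; decide
      simp only [Pi.add_apply, Matrix.add_apply, this, hJe, Matrix.one_apply, if_neg h]
      decide
  -- rank of the all-ones matrix is at most 1
  have hJ : J.rank ≤ 1 := by
    have : J =
        (Matrix.of fun (_ : Fin n) (_ : Fin 1) => (1 : ZMod 2)) *
        (Matrix.of fun (_ : Fin 1) (_ : Fin n) => (1 : ZMod 2)) := by
      ext x y; simp [Matrix.mul_apply, hJe]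
    rw [this]
    calc ((Matrix.of fun (_ : Fin n) (_ : Fin 1) => (1 : ZMod 2)) *
        (Matrix.of fun (_ : Fin 1) (_ : Fin n) => (1 : ZMod 2))).rank
        ≤ (Matrix.of fun (_ : Fin n) (_ : Fin 1) => (1 : ZMod 2)).rank :=
          Matrix.rank_mul_le_left _ _
      _ ≤ Fintype.card (Fin 1) := Matrix.rank_le_card_width _
      _ = 1 := by simp
  have hMrank : M.rank ≤ ℓ := by
    calc M.rank ≤ A.rank := Matrix.rank_mul_le_left _ _
      _ ≤ Fintype.card (Fin ℓ) := Matrix.rank_le_card_width _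
      _ = ℓ := by simp
  have hone : (1 : Matrix (Fin n) (Fin n) (ZMod 2)).rank = n := by
    rw [Matrix.rank_one]; simp
  have key : n ≤ 1 + ℓ := by
    calc n = (1 : Matrix (Fin n) (Fin n) (ZMod 2)).rank := hone.symm
      _ = (J + M).rank := by rw [hJM]
      _ ≤ J.rank + M.rank :=
          matrix_rank_add_le _ _
      _ ≤ 1 + ℓ := add_le_add hJ hMrank
  omega
end

section
/- If q is a product of k distinct primes, then any inner product encoding of the greater-than predicate GT_n on [n] modulo q has length at least n/k. -/
/-- If `q` is a product of `k` distinct primes, any inner product encoding of the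
greater-than predicate on `[n]` modulo `q` has length at least `n / k`. -/
theorem stmt_7 {n k ℓ : ℕ} (p : Fin k → ℕ) (hp : ∀ i, (p i).Prime)
    (hinj : Function.Injective p) (q : ℕ) (hq : q = ∏ i, p i)
    (vx vy : Fin n → Fin ℓ → ZMod q)
    (hcorrect : ∀ x y : Fin n, ((∑ i, vx x i * vy y i) = 0 ↔ y < x)) :
    n ≤ k * ℓ := by
  classical
  rcases Nat.eq_zero_or_pos n with hn | hn
  · simp [hn]
  obtain ⟨x0⟩ : Nonempty (Fin n) := ⟨⟨0, hn⟩⟩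
  rcases Nat.eq_zero_or_pos k with hk | hk
  · -- k = 0 : q = 1, contradiction
    exfalso
    subst hk
    have hq1 : q = 1 := by simpa using hq
    subst hq1
    have := (hcorrect x0 x0).mp (Subsingleton.elim _ _)
    exact lt_irrefl _ this
  have hqne : NeZero q := ⟨by
    rw [hq]
    exact Finset.prod_ne_zero_iff.mpr fun i _ => (hp i).ne_zero⟩
  -- for each x, the diagonal entry is nonzero mod q, hence mod some prime
  have hdvd : ∀ i : Fin k, p i ∣ q := fun i => hq ▸ Finset.dvd_prod_of_mem _ (Finset.mem_univ i)
  have hdiag : ∀ x : Fin n, ∃ i : Fin k,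
      (ZMod.castHom (hdvd i) (ZMod (p i))) (∑ j, vx x j * vy x j) ≠ 0 := by
    intro x
    by_contra hall
    push_neg at hall
    set a : ZMod q := ∑ j, vx x j * vy x j with ha
    have hane : a ≠ 0 := fun h0 => lt_irrefl x ((hcorrect x x).mp h0)
    apply hane
    -- all primes divide a.val, so q divides a.val
    have hpv : ∀ i : Fin k, p i ∣ a.val := by
      intro i
      have := hall i
      rwa [← ZMod.natCast_zmod_val a, map_natCast, ZMod.natCast_eq_zero_iff] at this
    have hqdvd : q ∣ a.val := by
      have himg : (∏ b ∈ Finset.univ.image p, b) ∣ a.val := by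
        refine Finset.prod_primes_dvd _ ?_ ?_
        · intro b hb
          simp only [Finset.mem_image] at hb
          obtain ⟨i, _, rfl⟩ := hb
          exact (hp i).prime
        · intro b hb
          simp only [Finset.mem_image] at hb
          obtain ⟨i, _, rfl⟩ := hb
          exact hpv i
      rwa [Finset.prod_image (fun x _ y _ h => hinj h), ← hq] at himg
    calc a = (a.val : ZMod q) := (ZMod.natCast_zmod_val a).symm
      _ = 0 := (ZMod.natCast_eq_zero_iff _ _).mpr hqdvd
  choose f hf using hdiag
  have hf' : ∀ (i : Fin k) (x : Fin n), f x = i →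
      (ZMod.castHom (hdvd i) (ZMod (p i))) (∑ j, vx x j * vy x j) ≠ 0 := by
    rintro i x rfl; exact hf x
  -- pigeonhole: some fiber of f has size ≥ n / k
  obtain ⟨i₀, -, hmax⟩ := Finset.exists_max_image (Finset.univ : Finset (Fin k))
    (fun i => (Finset.univ.filter (fun x => f x = i)).card) ⟨⟨0, hk⟩, Finset.mem_univ _⟩
  set S : Finset (Fin n) := Finset.univ.filter (fun x => f x = i₀) with hS
  have hnk : n ≤ k * S.card := by
    have h1 : (Finset.univ : Finset (Fin n)).card
        = ∑ i : Fin k, (Finset.univ.filter (fun x => f x = i)).card :=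
      Finset.card_eq_sum_card_fiberwise (fun x _ => Finset.mem_univ (f x))
    have h2 : ∑ i : Fin k, (Finset.univ.filter (fun x => f x = i)).card ≤ k * S.card := by
      calc ∑ i : Fin k, (Finset.univ.filter (fun x => f x = i)).card
          ≤ ∑ _i : Fin k, S.card := Finset.sum_le_sum fun i _ => hmax i (Finset.mem_univ i)
        _ = k * S.card := by simp [Finset.sum_const, mul_comm]
    calc n = (Finset.univ : Finset (Fin n)).card := by simp
      _ ≤ k * S.card := h1 ▸ h2
  -- the vectors vx x for x in S, reduced mod p i₀, are linearly independent
  haveI : Fact (p i₀).Prime := ⟨hp i₀⟩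
  set P := p i₀
  set c : ZMod q →+* ZMod P := ZMod.castHom (hdvd i₀) (ZMod P) with hc
  set w : S → (Fin ℓ → ZMod P) := fun x => fun j => c (vx x.1 j) with hw
  have hli : LinearIndependent (ZMod P) w := by
    rw [Fintype.linearIndependent_iff]
    intro g hg
    by_contra hne
    push_neg at hne
    obtain ⟨x, hx⟩ := hne
    -- take the minimal x with g x ≠ 0
    have hT : (Finset.univ.filter (fun x : S => g x ≠ 0)).Nonempty :=
      ⟨x, by simp [hx]⟩
    set x₀ : S := (Finset.univ.filter (fun x : S => g x ≠ 0)).min' hT with hx0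
    have hgx₀ : g x₀ ≠ 0 := by
      have := (Finset.univ.filter (fun x : S => g x ≠ 0)).min'_mem hT
      exact (Finset.mem_filter.mp this).2
    have hmin : ∀ x : S, g x ≠ 0 → x₀ ≤ x := fun x hxg =>
      Finset.min'_le _ _ (by simp [hxg])
    -- pair with vy x₀
    have key : ∑ x : S, g x * c (∑ j, vx x.1 j * vy x₀.1 j) = 0 := by
      have hgj : ∀ j : Fin ℓ, ∑ x : S, g x * c (vx x.1 j) = 0 := by
        intro j
        have := congrFun hg j
        simpa [hw, Finset.sum_apply] using this
      calc ∑ x : S, g x * c (∑ j, vx x.1 j * vy x₀.1 j)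
          = ∑ x : S, ∑ j, g x * (c (vx x.1 j) * c (vy x₀.1 j)) := by
            refine Finset.sum_congr rfl fun x _ => ?_
            rw [map_sum, Finset.mul_sum]
            refine Finset.sum_congr rfl fun j _ => by rw [map_mul]
        _ = ∑ j, (∑ x : S, g x * c (vx x.1 j)) * c (vy x₀.1 j) := by
            rw [Finset.sum_comm]
            refine Finset.sum_congr rfl fun j _ => ?_
            rw [Finset.sum_mul]
            refine Finset.sum_congr rfl fun x _ => by ring
        _ = 0 := by
            simp only [Finset.univ_eq_attach] at hgj ⊢
            simp [hgj]
    -- all terms except x₀ vanish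
    have hterm : ∀ x : S, x ∈ Finset.univ → x ≠ x₀ →
        g x * c (∑ j, vx x.1 j * vy x₀.1 j) = 0 := by
      intro x _ hxne
      by_cases hgx : g x = 0
      · simp [hgx]
      · have hlt : x₀ < x := lt_of_le_of_ne (hmin x hgx) (Ne.symm hxne)
        have hlt' : x₀.1 < x.1 := by exact_mod_cast hlt
        have : (∑ j, vx x.1 j * vy x₀.1 j) = 0 := (hcorrect x.1 x₀.1).mpr hlt'
        rw [this, map_zero, mul_zero]
    rw [Finset.sum_eq_single_of_mem x₀ (Finset.mem_univ x₀) hterm] at key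
    have hdne : c (∑ j, vx x₀.1 j * vy x₀.1 j) ≠ 0 :=
      hf' i₀ x₀.1 (Finset.mem_filter.mp x₀.2).2
    exact hdne (by
      rcases mul_eq_zero.mp key with h | h
      · exact absurd h hgx₀
      · exact h)
  have hcard : S.card ≤ ℓ := by
    have := hli.fintype_card_le_finrank
    simpa [Module.finrank_pi, Fintype.card_coe] using this
  calc n ≤ k * S.card := hnk
    _ ≤ k * ℓ := Nat.mul_le_mul_left k hcard
end

section
/- If q is a product of k distinct primes, then any inner product encoding of the inequality predicate NEQ_n on [n] modulo q has length at least n/k. (Any matrix representing NEQ_n is diagonal with nonzero diagonal entries modulo q; by pigeonhole, some prime factor p of q sees at least n/k nonzero diagonal entries, giving Z_p-rank at least n/k.) -/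
/-- If `q` is a product of `k` distinct primes, any inner product encoding of the
inequality predicate on `[n]` modulo `q` has length at least `n / k`. -/
theorem stmt_17 {n k ℓ : ℕ} (p : Fin k → ℕ) (hp : ∀ i, (p i).Prime)
    (hinj : Function.Injective p) (q : ℕ) (hq : q = ∏ i, p i)
    (vx vy : Fin n → Fin ℓ → ZMod q)
    (hcorrect : ∀ x y : Fin n, ((∑ i, vx x i * vy y i) = 0 ↔ x ≠ y)) :
    n ≤ k * ℓ := by
  classical
  rcases Nat.eq_zero_or_pos n with hn | hn
  · omega
  rcases Nat.eq_zero_or_pos k with hk | hk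
  · exfalso
    subst hk
    have hq1 : q = 1 := by simpa using hq
    subst hq1
    exact (hcorrect ⟨0, hn⟩ ⟨0, hn⟩).mp (Subsingleton.elim _ _) rfl
  have hq0 : q ≠ 0 := by
    rw [hq]
    exact Finset.prod_ne_zero_iff.mpr fun i _ => (hp i).ne_zero
  haveI : NeZero q := ⟨hq0⟩
  have hdvd : ∀ i, p i ∣ q := fun i => hq ▸ Finset.dvd_prod_of_mem p (Finset.mem_univ i)
  set d : Fin n → ZMod q := fun x => ∑ j, vx x j * vy x j with hd_def
  have hd : ∀ x, d x ≠ 0 := fun x h => (hcorrect x x).mp h rfl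
  have hex : ∀ x, ∃ i, (ZMod.castHom (hdvd i) (ZMod (p i))) (d x) ≠ 0 := by
    intro x
    by_contra hcon
    push_neg at hcon
    apply hd x
    have hvdvd : ∀ i, p i ∣ (d x).val := by
      intro i
      have h1 := hcon i
      rw [ZMod.castHom_apply] at h1
      have h2 : (((d x).val : ℕ) : ZMod (p i)) = 0 := by
        rw [ZMod.natCast_val]; exact h1
      exact (ZMod.natCast_eq_zero_iff _ _).mp h2
    have hqd : q ∣ (d x).val := by
      have himg : q = ∏ r ∈ Finset.univ.image p, r := by
        rw [hq, Finset.prod_image (fun a _ b _ h => hinj h)]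
      conv_lhs => rw [himg]
      refine Finset.prod_primes_dvd _ ?_ ?_
      · intro r hr
        obtain ⟨i, _, rfl⟩ := Finset.mem_image.mp hr
        exact (hp i).prime
      · intro r hr
        obtain ⟨i, _, rfl⟩ := Finset.mem_image.mp hr
        exact hvdvd i
    have hlt := ZMod.val_lt (d x)
    have hv0 : (d x).val = 0 := Nat.eq_zero_of_dvd_of_lt hqd hlt
    exact (ZMod.val_eq_zero _).mp hv0
  choose f hf using hex
  have hcard : ∀ i : Fin k, (Finset.univ.filter fun x => f x = i).card ≤ ℓ := by
    intro i
    haveI : Fact (p i).Prime := ⟨hp i⟩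
    set φ := ZMod.castHom (hdvd i) (ZMod (p i)) with hφ
    set S := (Finset.univ.filter fun x => f x = i) with hS
    set u : S → Fin ℓ → ZMod (p i) := fun x j => φ (vx (x : Fin n) j) with hu
    have hli : LinearIndependent (ZMod (p i)) u := by
      rw [Fintype.linearIndependent_iff]
      intro g hg y
      have key : ∑ x : S, g x * φ (∑ j, vx (x : Fin n) j * vy (y : Fin n) j) = 0 := by
        calc ∑ x : S, g x * φ (∑ j, vx (x : Fin n) j * vy (y : Fin n) j)
            = ∑ x : S, ∑ j, g x * (φ (vx (x : Fin n) j) * φ (vy (y : Fin n) j)) := by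
              simp [map_sum, map_mul, Finset.mul_sum]
          _ = ∑ j, (∑ x : S, g x * φ (vx (x : Fin n) j)) * φ (vy (y : Fin n) j) := by
              rw [Finset.sum_comm]
              simp [Finset.sum_mul, mul_assoc]
          _ = 0 := by
              have hz : ∀ j, ∑ x : S, g x * φ (vx (x : Fin n) j) = 0 := by
                intro j
                have := congrFun hg j
                simpa [hu, Finset.sum_apply] using this
              simp only [Finset.univ_eq_attach] at hz
              simp [hz]
      rw [Finset.sum_eq_single y] at key
      · have hyi : f (y : Fin n) = i := (Finset.mem_filter.mp y.2).2
        have hne : φ (d (y : Fin n)) ≠ 0 := by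
          have := hf (y : Fin n)
          rw [hyi] at this
          exact this
        have : g y * φ (d (y : Fin n)) = 0 := key
        rcases mul_eq_zero.mp this with h | h
        · exact h
        · exact absurd h hne
      · intro x _ hxy
        have hxy' : (x : Fin n) ≠ (y : Fin n) := fun h => hxy (Subtype.ext h)
        have h0 : (∑ j, vx (x : Fin n) j * vy (y : Fin n) j) = 0 :=
          (hcorrect _ _).mpr hxy'
        rw [h0, map_zero, mul_zero]
      · intro hy
        exact absurd (Finset.mem_univ y) hy
    have hle := hli.fintype_card_le_finrank
    rwa [Module.finrank_fintype_fun_eq_card, Fintype.card_coe, Fintype.card_fin] at hle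
  calc n = ∑ i : Fin k, (Finset.univ.filter fun x => f x = i).card := by
        have := Finset.card_eq_sum_card_fiberwise
          (f := f) (s := (Finset.univ : Finset (Fin n)))
          (t := (Finset.univ : Finset (Fin k))) (fun x _ => Finset.mem_univ (f x))
        simpa using this
    _ ≤ ∑ _i : Fin k, ℓ := Finset.sum_le_sum fun i _ => hcard i
    _ = k * ℓ := by simp [Finset.sum_const, mul_comm]
end

section
/- Every matrix F over Z_q representing the threshold predicate THR_m^1 (disjointness complement: [|S∩T| ≥ 1]) on subsets of [m], with rows ordered by increasing set size and columns ordered so that the i-th column set is the complement of the i-th row set, is upper triangular with all diagonal entries nonzero modulo q. Consequently, if q is a product of k distinct primes, any inner product encoding of THR_m^1 modulo q has length at least 2^m / k. -/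
lemma aux_det {ι K : Type*} [Fintype ι] [DecidableEq ι] [Field K] (M : Matrix ι ι K)
    (w : ι → ℕ) (hle : ∀ i j, M i j ≠ 0 → w i ≤ w j)
    (heq : ∀ i j, M i j ≠ 0 → w i = w j → i = j) :
    M.det = ∏ i, M i i := by
  rw [Matrix.det_apply]
  rw [Finset.sum_eq_single (1 : Equiv.Perm ι)]
  · simp
  · intro σ _ hσ
    have hz : ∏ i, M (σ i) i = 0 := by
      by_contra hprod
      have hne : ∀ i, M (σ i) i ≠ 0 := fun i =>
        Finset.prod_ne_zero_iff.mp hprod i (Finset.mem_univ i)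
      have hsum : ∑ i, w (σ i) = ∑ i, w i := Equiv.sum_comp σ w
      have hpt := (Finset.sum_eq_sum_iff_of_le
        (fun i _ => hle _ _ (hne i))).mp hsum
      exact hσ (Equiv.ext fun i => heq _ _ (hne i) (hpt i (Finset.mem_univ i)))
    simp [hz]
  · simp

lemma aux_cast {k : ℕ} (p : Fin k → ℕ) (hp : ∀ i, (p i).Prime)
    (hinj : Function.Injective p) {q : ℕ} (hq : q = ∏ i, p i) [NeZero q]
    (x : ZMod q) (hx : ∀ j, ((x.val : ℕ) : ZMod (p j)) = 0) : x = 0 := by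
  have hdvd : ∀ j, p j ∣ x.val := fun j => by
    haveI : NeZero (p j) := ⟨(hp j).pos.ne'⟩
    exact (ZMod.natCast_eq_zero_iff _ _).mp (hx j)
  have h3 : q = ∏ a ∈ Finset.univ.image p, a := by
    rw [hq, Finset.prod_image (fun a _ b _ h => hinj h)]
  have hqd : q ∣ x.val := by
    refine h3.dvd.trans ?_
    exact Finset.prod_primes_dvd _
      (fun a ha => by
        obtain ⟨j, _, rfl⟩ := Finset.mem_image.mp ha
        exact (hp j).prime)
      (fun a ha => by
        obtain ⟨j, _, rfl⟩ := Finset.mem_image.mp ha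
        exact hdvd j)
  have hval : x.val = 0 := Nat.eq_zero_of_dvd_of_lt hqd (ZMod.val_lt x)
  rw [← ZMod.natCast_rightInverse x, hval, Nat.cast_zero]

/-- Every matrix over `ZMod q` representing `THR_m^1` (the predicate `S ∩ T ≠ ∅`), with rows
ordered by nondecreasing set size and column `i` indexed by the complement of the set
indexing row `i`, is upper triangular with nonzero diagonal; consequently, if `q` is a
product of `k` distinct primes, any inner product encoding of `THR_m^1` modulo `q` has
length at least `2^m / k`. -/
theorem stmt_18 {m k : ℕ} (p : Fin k → ℕ) (hp : ∀ i, (p i).Prime)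
    (hinj : Function.Injective p) (q : ℕ) (hq : q = ∏ i, p i) :
    (∀ F : Matrix (Finset (Fin m)) (Finset (Fin m)) (ZMod q),
      (∀ S T : Finset (Fin m), (F S T = 0 ↔ ¬ Disjoint S T)) →
      ∀ e : Fin (2 ^ m) ≃ Finset (Fin m),
        (∀ i j : Fin (2 ^ m), i ≤ j → (e i).card ≤ (e j).card) →
        (∀ i j : Fin (2 ^ m), j < i → F (e i) ((e j)ᶜ) = 0) ∧
        (∀ i : Fin (2 ^ m), F (e i) ((e i)ᶜ) ≠ 0)) ∧
    (∀ (ℓ : ℕ) (vx vy : Finset (Fin m) → Fin ℓ → ZMod q),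
      (∀ S T : Finset (Fin m), ((∑ i, vx S i * vy T i) = 0 ↔ ¬ Disjoint S T)) →
      2 ^ m ≤ k * ℓ) := by
  constructor
  · intro F hF e hmono
    constructor
    · intro i j hji
      apply (hF _ _).mpr
      intro hd
      have hsub : e i ⊆ e j := disjoint_compl_right_iff.mp hd
      have heq : e i = e j :=
        Finset.eq_of_subset_of_card_le hsub (hmono j i hji.le)
      exact absurd (e.injective heq) hji.ne'
    · intro i h0
      exact (hF _ _).mp h0 disjoint_compl_right
  · intro ℓ vx vy hv
    rcases Nat.eq_zero_or_pos k with hk | hk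
    · subst hk
      simp only [Finset.univ_eq_empty, Finset.prod_empty] at hq
      subst hq
      exact absurd ((hv ∅ ∅).mp (Subsingleton.elim _ _)) (by simp)
    · haveI : NeZero q := ⟨by
        rw [hq]
        exact (Finset.prod_pos fun i _ => (hp i).pos).ne'⟩
      have hdvd : ∀ j, p j ∣ q := fun j =>
        hq ▸ Finset.dvd_prod_of_mem p (Finset.mem_univ j)
      have hdiagex : ∀ S : Finset (Fin m),
          ∃ j : Fin k, (((∑ i, vx S i * vy Sᶜ i).val : ℕ) : ZMod (p j)) ≠ 0 := by
        intro S
        by_contra h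
        push_neg at h
        exact (hv S Sᶜ).mp (aux_cast p hp hinj hq _ h) disjoint_compl_right
      choose g hg using hdiagex
      have hcard : (2 : ℕ) ^ m =
          ∑ j : Fin k, (Finset.univ.filter (fun S => g S = j)).card := by
        have h1 := Finset.card_eq_sum_card_fiberwise
          (f := g) (s := Finset.univ) (t := Finset.univ)
          (fun x _ => Finset.mem_univ _)
        simpa [Finset.card_univ, Fintype.card_finset] using h1
      obtain ⟨j0, -, hmax⟩ := Finset.exists_max_image Finset.univ
        (fun j : Fin k => (Finset.univ.filter (fun S => g S = j)).card)
        ⟨⟨0, hk⟩, Finset.mem_univ _⟩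
      set A := Finset.univ.filter (fun S => g S = j0) with hA
      have h2m : 2 ^ m ≤ k * A.card := by
        rw [hcard]
        calc ∑ j : Fin k, (Finset.univ.filter (fun S => g S = j)).card
            ≤ ∑ _j : Fin k, A.card :=
              Finset.sum_le_sum (fun j _ => hmax j (Finset.mem_univ j))
          _ = k * A.card := by simp [mul_comm]
      suffices hAl : A.card ≤ ℓ by
        exact h2m.trans (Nat.mul_le_mul_left k hAl)
      haveI : Fact (p j0).Prime := ⟨hp j0⟩
      haveI : NeZero (p j0) := ⟨(hp j0).pos.ne'⟩
      let φ : ZMod q →+* ZMod (p j0) := ZMod.castHom (hdvd j0) _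
      let M : Matrix A A (ZMod (p j0)) :=
        fun S T => φ (∑ i, vx (S : Finset (Fin m)) i * vy ((T : Finset (Fin m)))ᶜ i)
      have hsub : ∀ S T : A, M S T ≠ 0 → (S : Finset (Fin m)) ⊆ (T : Finset (Fin m)) := by
        intro S T h
        have hF : (∑ i, vx (S : Finset (Fin m)) i * vy ((T : Finset (Fin m)))ᶜ i) ≠ 0 :=
          fun h0 => h (by show φ _ = 0; rw [h0, map_zero])
        have hd : Disjoint (S : Finset (Fin m)) ((T : Finset (Fin m)))ᶜ :=
          not_not.mp (fun hd => hF ((hv _ _).mpr hd))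
        exact disjoint_compl_right_iff.mp hd
      have hdiag : ∀ S : A, M S S ≠ 0 := by
        intro S
        have hmem : g (S : Finset (Fin m)) = j0 :=
          (Finset.mem_filter.mp S.2).2
        have := hg (S : Finset (Fin m))
        rw [hmem] at this
        have hrw : M S S =
            (((∑ i, vx (S : Finset (Fin m)) i * vy ((S : Finset (Fin m)))ᶜ i).val : ℕ)
              : ZMod (p j0)) := by
          show φ _ = _
          rw [ZMod.natCast_val]
          exact ZMod.castHom_apply _
        rw [hrw]
        exact this
      have hdet : M.det = ∏ S, M S S :=
        aux_det M (fun S => (S : Finset (Fin m)).card)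
          (fun S T h => Finset.card_le_card (hsub S T h))
          (fun S T h hc => Subtype.ext
            (Finset.eq_of_subset_of_card_le (hsub S T h) hc.ge))
      have hdetne : M.det ≠ 0 := by
        rw [hdet]
        exact Finset.prod_ne_zero_iff.mpr fun S _ => hdiag S
      have hunit : IsUnit M :=
        (Matrix.isUnit_iff_isUnit_det M).mpr (isUnit_iff_ne_zero.mpr hdetne)
      have hrank : M.rank = A.card := by
        rw [Matrix.rank_of_isUnit M hunit, Fintype.card_coe]
      let X : Matrix A (Fin ℓ) (ZMod (p j0)) := fun S t => φ (vx (S : Finset (Fin m)) t)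
      let Y : Matrix (Fin ℓ) A (ZMod (p j0)) := fun t T => φ (vy ((T : Finset (Fin m)))ᶜ t)
      have hXY : M = X * Y := by
        ext S T
        rw [Matrix.mul_apply]
        simp [M, X, Y, map_sum]
      calc A.card = M.rank := hrank.symm
        _ = (X * Y).rank := by rw [hXY]
        _ ≤ X.rank := Matrix.rank_mul_le_left X Y
        _ ≤ Fintype.card (Fin ℓ) := Matrix.rank_le_card_width X
        _ = ℓ := Fintype.card_fin ℓ
end
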